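/- For every n ≥ 1 and ŝ ≥ 1, the instance J(n,ŝ) has a unique stable matching, namely μ̂ = {(d_j,c_j) : j ∈ [ŝ+1]} ∪ {(u_j^ℓ, w_j^ℓ) : j ∈ [ŝ+1], ℓ ∈ [n]}, whose set of unmatched students is exactly U_un = {e_1,…,e_ŝ}; moreover min_{v∈V} n_je(v) = n (so the minimum total capacity increase yielding a stable and perfect matching equals n + ŝ), while the assignment vector v with v(e_i) = c_i for all i ∈ [ŝ] has n_je(v) = n·ŝ. -/

import Mathlib

/-!
Basic framework for many-to-one matching (MM) instances with two-sided
preferences, following the paper "Optimal Capacity Modification for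
Many-to-One Matching Problems".

Preference/priority orders are encoded by rank functions (`rkS`, `rkW`):
a smaller rank means more preferred; ranks are required to be injective
on the respective sets of acceptable partners.
-/

structure MM (U W : Type*) [Fintype U] [Fintype W] [DecidableEq U] [DecidableEq W] where
  /-- acceptable schools of a student -/
  accS : U → Finset W
  /-- students on a school's priority list -/
  accW : W → Finset U
  /-- every student has a nonempty preference list -/
  acc_ne : ∀ u, (accS u).Nonempty
  /-- mutual acceptability -/
  acc_iff : ∀ u w, u ∈ accW w ↔ w ∈ accS u
  /-- rank of a school in a student's list (smaller = better) -/
  rkS : U → W → ℕ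
  /-- rank of a student in a school's priority list (smaller = better) -/
  rkW : W → U → ℕ
  rkS_inj : ∀ u, ∀ w1 ∈ accS u, ∀ w2 ∈ accS u, rkS u w1 = rkS u w2 → w1 = w2
  rkW_inj : ∀ w, ∀ u1 ∈ accW w, ∀ u2 ∈ accW w, rkW w u1 = rkW w u2 → u1 = u2
  /-- capacities -/
  q : W → ℕ
  q_pos : ∀ w, 1 ≤ q w

namespace MM

variable {U W : Type*} [Fintype U] [Fintype W] [DecidableEq U] [DecidableEq W]

/-- `μ` is a (partial) matching: it assigns only acceptable schools. -/
def IsMatching (I : MM U W) (μ : U → Option W) : Prop :=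
  ∀ u w, μ u = some w → w ∈ I.accS u

/-- the set of students assigned to school `w` -/
def assignedTo (μ : U → Option W) (w : W) : Set U := {u | μ u = some w}

/-- the number of students assigned to school `w` -/
noncomputable def load (μ : U → Option W) (w : W) : ℕ := (assignedTo μ w).ncard

/-- `μ` is feasible: it is a matching respecting all capacities. -/
def Feasible (I : MM U W) (μ : U → Option W) : Prop :=
  I.IsMatching μ ∧ ∀ w, load μ w ≤ I.q w

/-- `μ` is perfect: every student is matched. -/
def Perfect (μ : U → Option W) : Prop := ∀ u, μ u ≠ none

/-- student `u` strictly prefers school `w` to the outcome `o`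
(where `o = none` means being unmatched) -/
def PrefOut (I : MM U W) (u : U) (w : W) (o : Option W) : Prop :=
  o = none ∨ ∃ w', o = some w' ∧ I.rkS u w < I.rkS u w'

/-- `(u,w)` is a blocking pair of `μ` -/
def Blocks (I : MM U W) (μ : U → Option W) (u : U) (w : W) : Prop :=
  u ∈ I.accW w ∧ I.PrefOut u w (μ u) ∧
    (load μ w < I.q w ∨ ∃ u' ∈ assignedTo μ w, I.rkW w u < I.rkW w u')

/-- `μ` is stable: feasible and with no blocking pair -/
def Stable (I : MM U W) (μ : U → Option W) : Prop :=
  I.Feasible μ ∧ ∀ u w, ¬ I.Blocks μ u w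

/-- student `u` is strictly better off under `μ` than under `σ` -/
def Better (I : MM U W) (u : U) (μ σ : U → Option W) : Prop :=
  ∃ w, μ u = some w ∧ I.PrefOut u w (σ u)

/-- student `u` weakly prefers `μ` to `σ` -/
def WeakPref (I : MM U W) (u : U) (μ σ : U → Option W) : Prop :=
  μ u = σ u ∨ I.Better u μ σ

/-- `μ` dominates `σ` -/
def Dominates (I : MM U W) (μ σ : U → Option W) : Prop :=
  (∀ u, I.WeakPref u μ σ) ∧ ∃ u, I.Better u μ σ

/-- `μ` is (Pareto-)efficient: feasible and dominated by no feasible matching -/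
def Efficient (I : MM U W) (μ : U → Option W) : Prop :=
  I.Feasible μ ∧ ∀ σ, I.Feasible σ → ¬ I.Dominates σ μ

/-- `μ` is a student-optimal stable matching -/
def StudentOptimal (I : MM U W) (μ : U → Option W) : Prop :=
  I.Stable μ ∧ ∀ σ, I.Stable σ → ∀ u, I.WeakPref u μ σ

/-- increase capacities by the vector `r` -/
def incCap (I : MM U W) (r : W → ℕ) : MM U W :=
  { I with
    q := fun w => I.q w + r w
    q_pos := fun w => le_trans (I.q_pos w) (Nat.le_add_right _ _) }

/-- replace the capacities by `q'` -/
def withCap (I : MM U W) (q' : W → ℕ) (hq' : ∀ w, 1 ≤ q' w) : MM U W :=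
  { I with
    q := q'
    q_pos := hq' }

/-- student `x` justifiedly envies student `y` under `σ` -/
def JEnvy (I : MM U W) (σ : U → Option W) (x y : U) : Prop :=
  ∃ w, σ y = some w ∧ x ∈ I.accW w ∧ I.rkW w x < I.rkW w y ∧ I.PrefOut x w (σ x)

/-- the set of students unmatched under `μ` -/
def unmatchedSet (μ : U → Option W) : Set U := {u | μ u = none}

/-- `v` is an assignment vector: it assigns to each student unmatched
under `μhat` an acceptable school -/
def IsAsgVec (I : MM U W) (μhat : U → Option W) (v : U → W) : Prop :=
  ∀ u, μhat u = none → v u ∈ I.accS u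

/-- `μhat + v` : additionally match every unmatched student `u` to `v u` -/
def extend (μhat : U → Option W) (v : U → W) : U → Option W :=
  fun u => some ((μhat u).getD (v u))

/-- JE(v): the assigned students who justifiedly envy some unassigned student
under `μhat + v` -/
def JEset (I : MM U W) (μhat : U → Option W) (v : U → W) : Set U :=
  {x | μhat x ≠ none ∧ ∃ y, μhat y = none ∧ I.JEnvy (extend μhat v) x y}

/-- `n_je(v)` -/
noncomputable def nje (I : MM U W) (μhat : U → Option W) (v : U → W) : ℕ :=
  (I.JEset μhat v).ncard

end MM

section ExampleJ

/-!
The instance `J(n, ŝ)` of Example 3.8: students `e_1, …, e_ŝ`, and for each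
`j ∈ [ŝ+1]` a student `d_j` and students `u_j^1, …, u_j^n`; schools
`c_1, …, c_{ŝ+1}` and `w_j^ℓ`, all with capacity one.
-/

variable (n s : ℕ)

/-- students: `e_i` (`Sum.inl`), `d_j` (`Sum.inr (Sum.inl _)`),
`u_j^ℓ` (`Sum.inr (Sum.inr _)`) -/
abbrev JStu := Fin s ⊕ (Fin (s + 1) ⊕ (Fin (s + 1) × Fin n))

/-- schools: `c_j` (`Sum.inl`) and `w_j^ℓ` (`Sum.inr`) -/
abbrev JSch := Fin (s + 1) ⊕ (Fin (s + 1) × Fin n)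

def jAccS : JStu n s → Finset (JSch n s)
  | Sum.inl i => {Sum.inl i.castSucc, Sum.inl (Fin.last s)}
  | Sum.inr (Sum.inl j) => {Sum.inl j}
  | Sum.inr (Sum.inr p) => {Sum.inl p.1, Sum.inr p}

def jRkS : JStu n s → JSch n s → ℕ
  | Sum.inl i, Sum.inl j => if j = i.castSucc then 0 else 1
  | Sum.inl _, Sum.inr _ => 0
  | Sum.inr (Sum.inl _), _ => 0
  | Sum.inr (Sum.inr _), Sum.inl _ => 0
  | Sum.inr (Sum.inr _), Sum.inr _ => 1

def jAccW : JSch n s → Finset (JStu n s)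
  | Sum.inl j =>
      insert (Sum.inr (Sum.inl j))
        ((Finset.univ.image (fun ℓ : Fin n => Sum.inr (Sum.inr (j, ℓ)))) ∪
          ((Finset.univ.filter
              (fun i : Fin s => i.castSucc = j ∨ j = Fin.last s)).image Sum.inl))
  | Sum.inr p => {Sum.inr (Sum.inr p)}

def jRkW : JSch n s → JStu n s → ℕ
  | Sum.inl _, Sum.inr (Sum.inl _) => 0
  | Sum.inl _, Sum.inr (Sum.inr p) => 1 + p.2.val
  | Sum.inl _, Sum.inl i => 1 + n + i.val
  | Sum.inr _, _ => 0

/-- the instance `J(n, ŝ)` of Example 3.8 -/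
def JInst : MM (JStu n s) (JSch n s) where
  accS := jAccS n s
  accW := jAccW n s
  acc_ne := by
    rintro (i | j | p)
    · exact ⟨_, Finset.mem_insert_self _ _⟩
    · exact ⟨_, Finset.mem_singleton_self _⟩
    · exact ⟨_, Finset.mem_insert_self _ _⟩
  acc_iff := by
    rintro (i' | j' | p') (j | p) <;>
      simp [jAccS, jAccW, Prod.ext_iff, eq_comm] <;> aesop
  rkS := jRkS n s
  rkW := jRkW n s
  rkS_inj := by
    rintro (i | j | p) w1 h1 w2 h2 heq
    · simp only [jAccS, Finset.mem_insert, Finset.mem_singleton] at h1 h2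
      have hne : Fin.last s ≠ i.castSucc := by
        intro hcon
        have := congrArg Fin.val hcon
        simp [Fin.castSucc] at this
        omega
      rcases h1 with rfl | rfl <;> rcases h2 with rfl | rfl <;>
        simp_all [jRkS]
    · simp only [jAccS, Finset.mem_singleton] at h1 h2; rw [h1, h2]
    · simp only [jAccS, Finset.mem_insert, Finset.mem_singleton] at h1 h2
      rcases h1 with rfl | rfl <;> rcases h2 with rfl | rfl <;> simp_all [jRkS]
  rkW_inj := by
    rintro (j | p) u1 h1 u2 h2 heq
    · simp only [jAccW, Finset.mem_insert, Finset.mem_union, Finset.mem_image,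
        Finset.mem_univ, Finset.mem_filter, true_and] at h1 h2
      rcases h1 with rfl | ⟨ℓ1, rfl⟩ | ⟨i1, _, rfl⟩ <;>
        rcases h2 with rfl | ⟨ℓ2, rfl⟩ | ⟨i2, _, rfl⟩ <;>
        simp_all [jRkW] <;> omega
    · simp only [jAccW, Finset.mem_singleton] at h1 h2; rw [h1, h2]
  q := fun _ => 1
  q_pos := fun _ => le_rfl

/-- the (unique) stable matching of `J(n, ŝ)` -/
def jMuHat : JStu n s → Option (JSch n s)
  | Sum.inl _ => none
  | Sum.inr (Sum.inl j) => some (Sum.inl j)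
  | Sum.inr (Sum.inr p) => some (Sum.inr p)

/-- the assignment vector sending every `e_i` to `c_i` -/
def jVec : JStu n s → JSch n s
  | Sum.inl i => Sum.inl i.castSucc
  | Sum.inr _ => Sum.inl (Fin.last s)

section Aux

lemma assigned_muHat_inl (j : Fin (s+1)) :
    MM.assignedTo (jMuHat n s) (Sum.inl j) = {Sum.inr (Sum.inl j)} := by
  ext u
  rcases u with i | j' | p <;> simp [MM.assignedTo, jMuHat, eq_comm]

lemma assigned_muHat_inr (p : Fin (s+1) × Fin n) :
    MM.assignedTo (jMuHat n s) (Sum.inr p) = {Sum.inr (Sum.inr p)} := by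
  ext u
  rcases u with i | j' | p' <;> simp [MM.assignedTo, jMuHat, eq_comm]

lemma load_muHat_inl (j : Fin (s+1)) :
    MM.load (jMuHat n s) (Sum.inl j) = 1 := by
  rw [MM.load, assigned_muHat_inl]; exact Set.ncard_singleton _

lemma load_muHat_inr (p : Fin (s+1) × Fin n) :
    MM.load (jMuHat n s) (Sum.inr p) = 1 := by
  rw [MM.load, assigned_muHat_inr]; exact Set.ncard_singleton _

lemma muHat_stable : (JInst n s).Stable (jMuHat n s) := by
  refine ⟨⟨?_, ?_⟩, ?_⟩
  · rintro (i | j | p) w h <;> simp [jMuHat] at h <;> subst h <;>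
      simp [JInst, jAccS]
  · rintro (j | p)
    · rw [load_muHat_inl]; exact le_refl _
    · rw [load_muHat_inr]; exact le_refl _
  · rintro u (j | p) ⟨hacc, hpref, hcap⟩
    · rcases hcap with h | ⟨u', hu', hlt⟩
      · rw [load_muHat_inl] at h
        simp [JInst] at h
      · rw [assigned_muHat_inl] at hu'
        rw [Set.mem_singleton_iff] at hu'
        subst hu'
        simp [JInst, jRkW] at hlt
    · rcases hcap with h | ⟨u', hu', hlt⟩
      · rw [load_muHat_inr] at h
        simp [JInst] at h
      · rw [assigned_muHat_inr] at hu'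
        rw [Set.mem_singleton_iff] at hu'
        subst hu'
        simp [JInst, jRkW] at hlt

end Aux
section Uniq

lemma stable_d {μ : JStu n s → Option (JSch n s)} (h : (JInst n s).Stable μ)
    (j : Fin (s+1)) : μ (Sum.inr (Sum.inl j)) = some (Sum.inl j) := by
  by_contra hne
  have hnone : μ (Sum.inr (Sum.inl j)) = none := by
    cases hμ : μ (Sum.inr (Sum.inl j)) with
    | none => rfl
    | some w =>
      have hw := h.1.1 _ _ hμ
      simp [JInst, jAccS] at hw
      subst hw
      exact absurd hμ hne
  apply h.2 (Sum.inr (Sum.inl j)) (Sum.inl j)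
  refine ⟨by simp [JInst, jAccW], Or.inl hnone, ?_⟩
  by_cases hload : MM.load μ (Sum.inl j) < (JInst n s).q (Sum.inl j)
  · exact Or.inl hload
  · right
    have h1 : 0 < MM.load μ (Sum.inl j) := by
      simp only [JInst] at hload
      omega
    obtain ⟨u', hu'⟩ := (Set.ncard_pos (Set.toFinite _)).mp h1
    refine ⟨u', hu', ?_⟩
    have hmem := h.1.1 _ _ hu'
    rcases u' with i | j' | p
    · simp [JInst, jRkW]
    · simp [JInst, jAccS] at hmem
      exfalso
      have h5 : μ (Sum.inr (Sum.inl j')) = some (Sum.inl j) := hu'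
      subst hmem
      rw [hnone] at h5
      exact nomatch h5
    · simp [JInst, jRkW]

lemma stable_unique {μ : JStu n s → Option (JSch n s)} (h : (JInst n s).Stable μ) :
    μ = jMuHat n s := by
  have hd := stable_d n s h
  have honly : ∀ u j, μ u = some (Sum.inl j) → u = Sum.inr (Sum.inl j) := by
    intro u j hu
    by_contra hne
    have h2 : ({u, Sum.inr (Sum.inl j)} : Set (JStu n s)) ⊆
        MM.assignedTo μ (Sum.inl j) := by
      rintro x (rfl | rfl)
      · exact hu
      · exact hd j
    have h3 := Set.ncard_le_ncard h2 (Set.toFinite _)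
    rw [Set.ncard_pair hne] at h3
    have h4 := h.1.2 (Sum.inl j)
    simp only [JInst] at h4
    rw [MM.load] at h4
    omega
  have hu : ∀ p : Fin (s+1) × Fin n,
      μ (Sum.inr (Sum.inr p)) = some (Sum.inr p) := by
    intro p
    cases hμ : μ (Sum.inr (Sum.inr p)) with
    | some w =>
      have hw := h.1.1 _ _ hμ
      simp [JInst, jAccS] at hw
      rcases hw with rfl | rfl
      · exact absurd (honly _ _ hμ) (by simp)
      · rfl
    | none =>
      exfalso
      apply h.2 (Sum.inr (Sum.inr p)) (Sum.inr p)
      refine ⟨by simp [JInst, jAccW], Or.inl hμ, Or.inl ?_⟩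
      have hempty : MM.assignedTo μ (Sum.inr p) = ∅ := by
        ext u'
        simp only [MM.assignedTo, Set.mem_setOf_eq, Set.mem_empty_iff_false,
          iff_false]
        intro hu'
        have hw := h.1.1 _ _ hu'
        rcases u' with i | j' | p' <;> simp [JInst, jAccS] at hw
        obtain ⟨rfl, rfl⟩ := hw
        exact absurd hu' (by rw [hμ]; simp)
      rw [MM.load, hempty]
      simp [JInst]
  funext u
  rcases u with i | j | p
  · cases hμ : μ (Sum.inl i) with
    | none => simp [jMuHat]
    | some w =>
      exfalso
      have hw := h.1.1 _ _ hμ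
      simp [JInst, jAccS] at hw
      rcases hw with rfl | rfl <;> exact absurd (honly _ _ hμ) (by simp)
  · rw [hd j]; rfl
  · rw [hu p]; rfl

end Uniq
section JE

lemma extend_e (v : JStu n s → JSch n s) (i : Fin s) :
    MM.extend (jMuHat n s) v (Sum.inl i) = some (v (Sum.inl i)) := rfl

lemma extend_d (v : JStu n s → JSch n s) (j : Fin (s+1)) :
    MM.extend (jMuHat n s) v (Sum.inr (Sum.inl j)) = some (Sum.inl j) := rfl

lemma extend_u (v : JStu n s → JSch n s) (p : Fin (s+1) × Fin n) :
    MM.extend (jMuHat n s) v (Sum.inr (Sum.inr p)) = some (Sum.inr p) := rfl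

lemma mem_JEset_iff (v : JStu n s → JSch n s)
    (hv : (JInst n s).IsAsgVec (jMuHat n s) v) (x : JStu n s) :
    x ∈ (JInst n s).JEset (jMuHat n s) v ↔
      ∃ p : Fin (s+1) × Fin n, x = Sum.inr (Sum.inr p) ∧
        ∃ i : Fin s, v (Sum.inl i) = Sum.inl p.1 := by
  constructor
  · rintro ⟨hx, y, hy, w, hw, hacc, hrk, hpref⟩
    rcases y with i | j' | p'
    · rcases hv (Sum.inl i) (by simp [jMuHat]) with hmem
      rw [extend_e] at hw
      injection hw with hw
      subst hw
      simp only [JInst, jAccS, Finset.mem_insert, Finset.mem_singleton] at hmem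
      obtain ⟨j, hj⟩ : ∃ j : Fin (s+1), v (Sum.inl i) = Sum.inl j := by
        rcases hmem with h | h <;> exact ⟨_, h⟩
      rw [hj] at hacc hrk hpref
      simp only [JInst, jAccW, Finset.mem_insert, Finset.mem_union,
        Finset.mem_image, Finset.mem_univ, Finset.mem_filter, true_and] at hacc
      rcases hacc with rfl | ⟨ℓ, rfl⟩ | ⟨i', hi', rfl⟩
      · exfalso
        rw [extend_d] at hpref
        rcases hpref with h | ⟨w', hw', hlt⟩
        · exact nomatch h
        · injection hw' with hw'
          subst hw'
          exact lt_irrefl _ hlt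
      · exact ⟨(j, ℓ), rfl, i, hj⟩
      · exact absurd hx (by simp [jMuHat])
    · exact absurd hy (by simp [jMuHat])
    · exact absurd hy (by simp [jMuHat])
  · rintro ⟨⟨j, ℓ⟩, rfl, i, hvi⟩
    refine ⟨by simp [jMuHat], Sum.inl i, by simp [jMuHat],
      Sum.inl j, by rw [extend_e, hvi], ?_, ?_, ?_⟩
    · simp [JInst, jAccW]
    · simp [JInst, jRkW]
      omega
    · rw [extend_u]
      exact Or.inr ⟨Sum.inr (j, ℓ), rfl, by simp [JInst, jRkS]⟩

end JE
section NJE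

/-- the constant assignment vector sending everyone to `c_{ŝ+1}` -/
def jVec0 : JStu n s → JSch n s := fun _ => Sum.inl (Fin.last s)

lemma jVec0_asg : (JInst n s).IsAsgVec (jMuHat n s) (jVec0 n s) := by
  intro u hu
  rcases u with i | j | p <;> simp [jMuHat] at hu ⊢ <;> simp [JInst, jAccS, jVec0]

lemma jVec_asg : (JInst n s).IsAsgVec (jMuHat n s) (jVec n s) := by
  intro u hu
  rcases u with i | j | p <;> simp [jMuHat] at hu ⊢ <;> simp [JInst, jAccS, jVec]

lemma nje_jVec0 (hs : 1 ≤ s) :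
    (JInst n s).nje (jMuHat n s) (jVec0 n s) = n := by
  have hset : (JInst n s).JEset (jMuHat n s) (jVec0 n s) =
      ↑(Finset.univ.image
          (fun ℓ : Fin n => (Sum.inr (Sum.inr (Fin.last s, ℓ)) : JStu n s))) := by
    ext x
    rw [mem_JEset_iff n s _ (jVec0_asg n s)]
    simp only [Finset.coe_image, Finset.coe_univ, Set.image_univ, Set.mem_range]
    constructor
    · rintro ⟨⟨j, ℓ⟩, rfl, i, hvi⟩
      simp only [jVec0, Sum.inl.injEq] at hvi
      exact ⟨ℓ, by rw [hvi]⟩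
    · rintro ⟨ℓ, rfl⟩
      exact ⟨(Fin.last s, ℓ), rfl, ⟨0, hs⟩, rfl⟩
  rw [MM.nje, hset, Set.ncard_coe_finset,
    Finset.card_image_of_injective _ (by intro a b h; simpa using h)]
  simp

lemma nje_jVec : (JInst n s).nje (jMuHat n s) (jVec n s) = n * s := by
  have hset : (JInst n s).JEset (jMuHat n s) (jVec n s) =
      ↑(Finset.univ.image
          (fun q : Fin s × Fin n =>
            (Sum.inr (Sum.inr (q.1.castSucc, q.2)) : JStu n s))) := by
    ext x
    rw [mem_JEset_iff n s _ (jVec_asg n s)]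
    simp only [Finset.coe_image, Finset.coe_univ, Set.image_univ, Set.mem_range]
    constructor
    · rintro ⟨⟨j, ℓ⟩, rfl, i, hvi⟩
      simp only [jVec, Sum.inl.injEq] at hvi
      exact ⟨(i, ℓ), by rw [hvi]⟩
    · rintro ⟨⟨i, ℓ⟩, rfl⟩
      exact ⟨(i.castSucc, ℓ), rfl, i, rfl⟩
  rw [MM.nje, hset, Set.ncard_coe_finset,
    Finset.card_image_of_injective _ ?inj]
  · simp [mul_comm]
  · rintro ⟨a, b⟩ ⟨c, d⟩ h
    simp only [Sum.inr.injEq, Prod.mk.injEq, Fin.castSucc_inj] at h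
    obtain ⟨h1, h2⟩ := h
    exact Prod.ext h1 h2

lemma nje_lb (hs : 1 ≤ s) (v : JStu n s → JSch n s)
    (hv : (JInst n s).IsAsgVec (jMuHat n s) v) :
    n ≤ (JInst n s).nje (jMuHat n s) v := by
  set i0 : Fin s := ⟨0, hs⟩
  have hmem := hv (Sum.inl i0) (by simp [jMuHat])
  simp only [JInst, jAccS, Finset.mem_insert, Finset.mem_singleton] at hmem
  obtain ⟨j0, hj0⟩ : ∃ j : Fin (s+1), v (Sum.inl i0) = Sum.inl j := by
    rcases hmem with h | h <;> exact ⟨_, h⟩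
  have hsub : ↑(Finset.univ.image
      (fun ℓ : Fin n => (Sum.inr (Sum.inr (j0, ℓ)) : JStu n s))) ⊆
      (JInst n s).JEset (jMuHat n s) v := by
    intro x hx
    simp only [Finset.coe_image, Finset.coe_univ, Set.image_univ,
      Set.mem_range] at hx
    obtain ⟨ℓ, rfl⟩ := hx
    rw [mem_JEset_iff n s _ hv]
    exact ⟨(j0, ℓ), rfl, i0, hj0⟩
  have h1 := Set.ncard_le_ncard hsub (Set.toFinite _)
  rw [Set.ncard_coe_finset,
    Finset.card_image_of_injective _ (by intro a b h; simpa using h)] at h1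
  simpa [MM.nje] using h1

lemma sInf_nje (hs : 1 ≤ s) :
    sInf {k : ℕ | ∃ v : JStu n s → JSch n s,
        (JInst n s).IsAsgVec (jMuHat n s) v ∧ (JInst n s).nje (jMuHat n s) v = k}
      = n := by
  have hmem : n ∈ {k : ℕ | ∃ v : JStu n s → JSch n s,
      (JInst n s).IsAsgVec (jMuHat n s) v ∧ (JInst n s).nje (jMuHat n s) v = k} :=
    ⟨jVec0 n s, jVec0_asg n s, nje_jVec0 n s hs⟩
  refine le_antisymm (Nat.sInf_le hmem) ?_
  obtain ⟨v, hv, hk⟩ := Nat.sInf_mem ⟨n, hmem⟩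
  rw [← hk]
  exact nje_lb n s hs v hv

end NJE
section Cap

/-- capacity increase: `n + ŝ` extra seats at `c_{ŝ+1}` -/
def jR0 : JSch n s → ℕ := fun w => if w = Sum.inl (Fin.last s) then n + s else 0

/-- a stable perfect matching for the increased capacities -/
def jMu1 : JStu n s → Option (JSch n s)
  | Sum.inl _ => some (Sum.inl (Fin.last s))
  | Sum.inr (Sum.inl j) => some (Sum.inl j)
  | Sum.inr (Sum.inr p) =>
      if p.1 = Fin.last s then some (Sum.inl (Fin.last s)) else some (Sum.inr p)

lemma jR0_sum : (∑ w, jR0 n s w) = n + s := by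
  rw [show (fun w => jR0 n s w) = fun w =>
      if w = Sum.inl (Fin.last s) then n + s else 0 from rfl]
  rw [Finset.sum_ite_eq' Finset.univ (Sum.inl (Fin.last s) : JSch n s)
    (fun _ => n + s)]
  simp

lemma jMu1_last :
    MM.assignedTo (jMu1 n s) (Sum.inl (Fin.last s)) =
      ↑(insert (Sum.inr (Sum.inl (Fin.last s)) : JStu n s)
          ((Finset.univ.image (Sum.inl : Fin s → JStu n s)) ∪
            (Finset.univ.image
              (fun ℓ : Fin n => Sum.inr (Sum.inr (Fin.last s, ℓ)))))) := by
  ext u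
  rcases u with i | j | ⟨j, ℓ⟩
  · simp [MM.assignedTo, jMu1]
  · simp [MM.assignedTo, jMu1, eq_comm]
  · by_cases hj : j = Fin.last s <;>
      simp [MM.assignedTo, jMu1, hj, eq_comm, Prod.ext_iff]

lemma jMu1_last_card :
    (insert (Sum.inr (Sum.inl (Fin.last s)) : JStu n s)
        ((Finset.univ.image (Sum.inl : Fin s → JStu n s)) ∪
          (Finset.univ.image
            (fun ℓ : Fin n => Sum.inr (Sum.inr (Fin.last s, ℓ)))))).card
      = 1 + (s + n) := by
  rw [Finset.card_insert_of_notMem (by simp), Finset.card_union_of_disjoint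
    (by simp [Finset.disjoint_left]),
    Finset.card_image_of_injective _ Sum.inl_injective,
    Finset.card_image_of_injective _ (by intro a b h; simpa using h)]
  simp [add_comm]

lemma load_jMu1_last :
    MM.load (jMu1 n s) (Sum.inl (Fin.last s)) = 1 + (s + n) := by
  rw [MM.load, jMu1_last, Set.ncard_coe_finset, jMu1_last_card]

lemma assigned_jMu1_inl (j : Fin (s+1)) (hj : j ≠ Fin.last s) :
    MM.assignedTo (jMu1 n s) (Sum.inl j) = {Sum.inr (Sum.inl j)} := by
  ext u
  rcases u with i | j' | ⟨j', ℓ⟩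
  · simp [MM.assignedTo, jMu1, (Ne.symm hj)]
  · simp [MM.assignedTo, jMu1, eq_comm]
  · by_cases h' : j' = Fin.last s <;>
      simp [MM.assignedTo, jMu1, h', Ne.symm hj]

lemma load_jMu1_inr (p : Fin (s+1) × Fin n) :
    MM.load (jMu1 n s) (Sum.inr p) ≤ 1 := by
  have : MM.assignedTo (jMu1 n s) (Sum.inr p) ⊆ {Sum.inr (Sum.inr p)} := by
    intro u hu
    rcases u with i | j' | ⟨j', ℓ⟩
    · simp [MM.assignedTo, jMu1] at hu
    · simp [MM.assignedTo, jMu1] at hu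
    · by_cases h' : j' = Fin.last s <;>
        simp_all [MM.assignedTo, jMu1, Prod.ext_iff]
  calc MM.load (jMu1 n s) (Sum.inr p) ≤ ({Sum.inr (Sum.inr p)} : Set (JStu n s)).ncard :=
        Set.ncard_le_ncard this (Set.toFinite _)
    _ = 1 := Set.ncard_singleton _

lemma jMu1_stable_perfect :
    ((JInst n s).incCap (jR0 n s)).Stable (jMu1 n s) ∧ MM.Perfect (jMu1 n s) := by
  constructor
  · refine ⟨⟨?_, ?_⟩, ?_⟩
    · rintro (i | j | ⟨j, ℓ⟩) w h
      · simp [jMu1] at h; subst h; simp [MM.incCap, JInst, jAccS]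
      · simp [jMu1] at h; subst h; simp [MM.incCap, JInst, jAccS]
      · by_cases hj : j = Fin.last s <;> simp [jMu1, hj] at h <;> subst h <;>
          simp [MM.incCap, JInst, jAccS, hj]
    · rintro (j | p)
      · by_cases hj : j = Fin.last s
        · subst hj
          rw [load_jMu1_last]
          simp [MM.incCap, JInst, jR0]
          omega
        · rw [MM.load, assigned_jMu1_inl n s j hj, Set.ncard_singleton]
          simp [MM.incCap, JInst]
      · calc MM.load (jMu1 n s) (Sum.inr p) ≤ 1 := load_jMu1_inr n s p
          _ ≤ _ := by simp [MM.incCap, JInst]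
    · rintro u (j | p) ⟨hacc, hpref, hcap⟩
      · by_cases hj : j = Fin.last s
        · subst hj
          -- every acceptable student of c_last is matched to c_last
          simp only [MM.incCap, JInst, jAccW, Finset.mem_insert, Finset.mem_union,
            Finset.mem_image, Finset.mem_univ, Finset.mem_filter, true_and] at hacc
          have hmatched : jMu1 n s u = some (Sum.inl (Fin.last s)) := by
            rcases hacc with rfl | ⟨ℓ, rfl⟩ | ⟨i, hi, rfl⟩
            · rfl
            · simp [jMu1]
            · rfl
          rw [hmatched] at hpref
          rcases hpref with h | ⟨w', hw', hlt⟩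
          · exact nomatch h
          · injection hw' with hw'
            subst hw'
            exact lt_irrefl _ hlt
        · simp only [MM.incCap, JInst, jAccW, Finset.mem_insert, Finset.mem_union,
            Finset.mem_image, Finset.mem_univ, Finset.mem_filter, true_and] at hacc
          have hload : MM.load (jMu1 n s) (Sum.inl j) = 1 := by
            rw [MM.load, assigned_jMu1_inl n s j hj, Set.ncard_singleton]
          rcases hcap with h | ⟨u', hu', hlt⟩
          · rw [hload] at h
            simp [MM.incCap, JInst, jR0, Ne.symm, hj] at h
          · rw [assigned_jMu1_inl n s j hj, Set.mem_singleton_iff] at hu'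
            subst hu'
            simp [MM.incCap, JInst, jRkW] at hlt
      · simp only [MM.incCap, JInst, jAccW, Finset.mem_singleton] at hacc
        subst hacc
        by_cases hj : p.1 = Fin.last s
        · rw [show jMu1 n s (Sum.inr (Sum.inr p)) = some (Sum.inl (Fin.last s)) by
            simp [jMu1, hj]] at hpref
          rcases hpref with h | ⟨w', hw', hlt⟩
          · exact nomatch h
          · injection hw' with hw'
            subst hw'
            simp [MM.incCap, JInst, jRkS] at hlt
        · rw [show jMu1 n s (Sum.inr (Sum.inr p)) = some (Sum.inr p) by
            simp [jMu1, hj]] at hpref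
          rcases hpref with h | ⟨w', hw', hlt⟩
          · exact nomatch h
          · injection hw' with hw'
            subst hw'
            exact lt_irrefl _ hlt
  · rintro (i | j | ⟨j, ℓ⟩) <;> simp [jMu1]
    by_cases hj : j = Fin.last s <;> simp [hj]

end Cap
section CapLB

lemma cap_lb (hs : 1 ≤ s) (r : JSch n s → ℕ)
    (μ : JStu n s → Option (JSch n s))
    (hst : ((JInst n s).incCap r).Stable μ) (hpf : MM.Perfect μ) :
    n + s ≤ ∑ w, r w := by
  -- every d_j gets c_j
  have hd : ∀ j : Fin (s+1), μ (Sum.inr (Sum.inl j)) = some (Sum.inl j) := by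
    intro j
    cases hμ : μ (Sum.inr (Sum.inl j)) with
    | none => exact absurd hμ (hpf _)
    | some w =>
      have hw := hst.1.1 _ _ hμ
      simp [MM.incCap, JInst, jAccS] at hw
      rw [hw]
  -- each e_i goes to some school c_{g i}
  have hge : ∀ i : Fin s, ∃ j : Fin (s+1), μ (Sum.inl i) = some (Sum.inl j) := by
    intro i
    cases hμ : μ (Sum.inl i) with
    | none => exact absurd hμ (hpf _)
    | some w =>
      have hw := hst.1.1 _ _ hμ
      simp [MM.incCap, JInst, jAccS] at hw
      rcases hw with rfl | rfl <;> exact ⟨_, rfl⟩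
  choose g hg using hge
  -- all u_{g i}^ℓ are matched to c_{g i}
  have hu : ∀ (i : Fin s) (ℓ : Fin n),
      μ (Sum.inr (Sum.inr (g i, ℓ))) = some (Sum.inl (g i)) := by
    intro i ℓ
    by_contra hne
    apply hst.2 (Sum.inr (Sum.inr (g i, ℓ))) (Sum.inl (g i))
    refine ⟨by simp [MM.incCap, JInst, jAccW], ?_, ?_⟩
    · cases hμ : μ (Sum.inr (Sum.inr (g i, ℓ))) with
      | none => exact Or.inl rfl
      | some w =>
        have hw := hst.1.1 _ _ hμ
        simp [MM.incCap, JInst, jAccS] at hw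
        rcases hw with rfl | rfl
        · exact absurd hμ hne
        · exact Or.inr ⟨Sum.inr (g i, ℓ), rfl, by simp [MM.incCap, JInst, jRkS]⟩
    · refine Or.inr ⟨Sum.inl i, hg i, ?_⟩
      simp [MM.incCap, JInst, jRkW]
      omega
  -- count: for every j in the image of g, r (c_j) ≥ n + size of the fiber
  have hrj : ∀ j ∈ Finset.univ.image g,
      n + (Finset.univ.filter fun i => g i = j).card ≤ r (Sum.inl j) := by
    intro j hj
    simp only [Finset.mem_image, Finset.mem_univ, true_and] at hj
    obtain ⟨i0, hi0⟩ := hj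
    set T : Finset (JStu n s) :=
      insert (Sum.inr (Sum.inl j))
        ((Finset.univ.image (fun ℓ : Fin n => Sum.inr (Sum.inr (j, ℓ)))) ∪
          ((Finset.univ.filter fun i => g i = j).image Sum.inl)) with hT
    have hsub : ↑T ⊆ MM.assignedTo μ (Sum.inl j) := by
      intro x hx
      simp only [hT, Finset.coe_insert, Set.mem_insert_iff, Finset.coe_union,
        Set.mem_union, Finset.coe_image, Set.mem_image, Finset.mem_coe,
        Finset.coe_univ, Set.image_univ, Set.mem_range, Finset.mem_filter,
        Finset.mem_univ, true_and] at hx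
      rcases hx with rfl | ⟨ℓ, rfl⟩ | ⟨i, hi, rfl⟩
      · exact hd j
      · have := hu i0 ℓ
        rw [hi0] at this
        exact this
      · have := hg i
        rw [hi] at this
        exact this
    have hcardT : T.card = 1 + (n + (Finset.univ.filter fun i => g i = j).card) := by
      rw [hT, Finset.card_insert_of_notMem (by simp),
        Finset.card_union_of_disjoint (by simp [Finset.disjoint_left]),
        Finset.card_image_of_injective _ (by intro a b h; simpa using h),
        Finset.card_image_of_injective _ Sum.inl_injective]
      simp
      omega
    have hload : T.card ≤ MM.load μ (Sum.inl j) := by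
      rw [MM.load, ← Set.ncard_coe_finset T]
      exact Set.ncard_le_ncard hsub (Set.toFinite _)
    have hq := hst.1.2 (Sum.inl j)
    simp only [MM.incCap, JInst] at hq
    omega
  -- sum up
  have h1 : ∑ j ∈ Finset.univ.image g, (n + (Finset.univ.filter fun i => g i = j).card)
      ≤ ∑ j ∈ Finset.univ.image g, r (Sum.inl j) :=
    Finset.sum_le_sum hrj
  have h2 : ∑ j ∈ Finset.univ.image g, r (Sum.inl j)
      = ∑ w ∈ (Finset.univ.image g).image Sum.inl, r w :=
    (Finset.sum_image (fun a _ b _ h => Sum.inl_injective h)).symm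
  have h3 : ∑ w ∈ (Finset.univ.image g).image Sum.inl, r w ≤ ∑ w, r w :=
    Finset.sum_le_sum_of_subset (Finset.subset_univ _)
  have h4 : ∑ j ∈ Finset.univ.image g, (Finset.univ.filter fun i => g i = j).card
      = s := by
    rw [← Finset.card_eq_sum_card_fiberwise
      (fun i _ => Finset.mem_image_of_mem g (Finset.mem_univ i))]
    simp
  have h5 : 1 ≤ (Finset.univ.image g).card := by
    rw [Nat.one_le_iff_ne_zero, ← Nat.pos_iff_ne_zero, Finset.card_pos]
    exact ⟨g ⟨0, hs⟩, Finset.mem_image_of_mem g (Finset.mem_univ _)⟩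
  rw [Finset.sum_add_distrib, Finset.sum_const, smul_eq_mul, h4] at h1
  have : n + s ≤ (Finset.univ.image g).card * n + s := by nlinarith
  omega

end CapLB
/-- Example 3.8: `J(n, ŝ)` has the unique stable matching
`μ̂`, whose unmatched students are exactly `e_1, …, e_ŝ`; the minimum of
`n_je` is `n` and the minimum total capacity increase yielding a stable and
perfect matching is `n + ŝ`, whereas the assignment vector sending each `e_i`
to `c_i` has `n_je = n·ŝ`. -/
theorem statement_11 (hn : 1 ≤ n) (hs : 1 ≤ s) :
    (JInst n s).Stable (jMuHat n s) ∧
    (∀ μ : JStu n s → Option (JSch n s), (JInst n s).Stable μ → μ = jMuHat n s) ∧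
    MM.unmatchedSet (jMuHat n s) = {u : JStu n s | ∃ i, u = Sum.inl i} ∧
    sInf {k : ℕ | ∃ v : JStu n s → JSch n s,
        (JInst n s).IsAsgVec (jMuHat n s) v ∧ (JInst n s).nje (jMuHat n s) v = k} = n ∧
    sInf {t : ℕ | ∃ r : JSch n s → ℕ, (∑ w, r w) = t ∧
        ∃ μ : JStu n s → Option (JSch n s),
          ((JInst n s).incCap r).Stable μ ∧ MM.Perfect μ} = n + s ∧
    (JInst n s).nje (jMuHat n s) (jVec n s) = n * s := by
  refine ⟨muHat_stable n s, fun μ h => stable_unique n s h, ?_,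
    sInf_nje n s hs, ?_, nje_jVec n s⟩
  · ext u
    rcases u with i | j | p <;> simp [MM.unmatchedSet, jMuHat]
  · have hmem : n + s ∈ {t : ℕ | ∃ r : JSch n s → ℕ, (∑ w, r w) = t ∧
        ∃ μ : JStu n s → Option (JSch n s),
          ((JInst n s).incCap r).Stable μ ∧ MM.Perfect μ} :=
      ⟨jR0 n s, jR0_sum n s, jMu1 n s, (jMu1_stable_perfect n s).1,
        (jMu1_stable_perfect n s).2⟩
    refine le_antisymm (Nat.sInf_le hmem) ?_
    obtain ⟨r, hr, μ, hstab, hperf⟩ := Nat.sInf_mem ⟨n + s, hmem⟩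
    rw [← hr]
    exact cap_lb n s hs r μ hstab hperf

end ExampleJ
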